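/- There exists a constant C > 0, depending only on q, such that for all n ∈ ½ℤ₊ with n ≥ 1/2, all half-integers i ∈ {−n, …, n} and j ∈ {−n+1/2, …, n−1/2}, every entry of the 2×2 matrix b⁻_{nij} + q^{n+i} · diag((1−q^{2n+2j+1})^{1/2}, (1−q^{2n+2j−1})^{1/2}) has absolute value at most C·q^{2n}. -/

import Mathlib

noncomputable section

open Real

/-- The q-number `[m] = (q^m - q^(-m))/(q - q⁻¹)`. -/
def qnum (q m : ℝ) : ℝ := (q ^ m - q ^ (-m)) / (q - q⁻¹)

/-- The 2×2 matrix `a⁺_{nij}`. -/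
def aP (q n i j : ℝ) : Matrix (Fin 2) (Fin 2) ℝ :=
  (q ^ ((i + j - 1/2) / 2) * Real.sqrt (qnum q (n + i + 1))) •
    !![q ^ (-n - 1/2) * Real.sqrt (qnum q (n + j + 3/2)) / qnum q (2*n + 2), 0;
       q ^ ((1:ℝ)/2) * Real.sqrt (qnum q (n - j + 1/2)) / (qnum q (2*n + 1) * qnum q (2*n + 2)),
       q ^ (-n) * Real.sqrt (qnum q (n + j + 1/2)) / qnum q (2*n + 1)]

/-- The 2×2 matrix `a⁻_{nij}`. -/
def aM (q n i j : ℝ) : Matrix (Fin 2) (Fin 2) ℝ :=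
  (q ^ ((i + j - 1/2) / 2) * Real.sqrt (qnum q (n - i))) •
    !![q ^ (n + 1) * Real.sqrt (qnum q (n - j + 1/2)) / qnum q (2*n + 1),
       -(q ^ ((1:ℝ)/2) * Real.sqrt (qnum q (n + j + 1/2)) / (qnum q (2*n) * qnum q (2*n + 1)));
       0, q ^ (n + 1/2) * Real.sqrt (qnum q (n - j - 1/2)) / qnum q (2*n)]

/-- The 2×2 matrix `b⁺_{nij}`. -/
def bP (q n i j : ℝ) : Matrix (Fin 2) (Fin 2) ℝ :=
  (q ^ ((i + j - 1/2) / 2) * Real.sqrt (qnum q (n + i + 1))) •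
    !![Real.sqrt (qnum q (n - j + 3/2)) / qnum q (2*n + 2), 0;
       -(q ^ (-n - 1) * Real.sqrt (qnum q (n + j + 1/2)) / (qnum q (2*n + 1) * qnum q (2*n + 2))),
       q ^ (-(1:ℝ)/2) * Real.sqrt (qnum q (n - j + 1/2)) / qnum q (2*n + 1)]

/-- The 2×2 matrix `b⁻_{nij}`. -/
def bM (q n i j : ℝ) : Matrix (Fin 2) (Fin 2) ℝ :=
  (q ^ ((i + j - 1/2) / 2) * Real.sqrt (qnum q (n - i))) •
    !![-(q ^ (-(1:ℝ)/2) * Real.sqrt (qnum q (n + j + 1/2)) / qnum q (2*n + 1)),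
       -(q ^ n * Real.sqrt (qnum q (n - j + 1/2)) / (qnum q (2*n) * qnum q (2*n + 1)));
       0, -(Real.sqrt (qnum q (n + j - 1/2)) / qnum q (2*n))]

/-- `n` is a nonnegative half-integer: `n ∈ ½ℤ₊ = {0, 1/2, 1, 3/2, …}`. -/
def HalfNat (n : ℝ) : Prop := ∃ N : ℕ, (N : ℝ) = 2 * n

/-- `i ∈ {-n, -n+1, …, n}`. -/
def IdxRange (n i : ℝ) : Prop := (∃ k : ℕ, (k : ℝ) = i + n) ∧ i ≤ n

/-- `j ∈ {-n+1/2, -n+3/2, …, n-1/2}`. -/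
def JRangeIn (n j : ℝ) : Prop := (∃ k : ℕ, (k : ℝ) = j + n - 1/2) ∧ j ≤ n - 1/2

/-- `j ∈ {-n-1/2, -n+1/2, …, n+1/2}`. -/
def JRangeOut (n j : ℝ) : Prop := (∃ k : ℕ, (k : ℝ) = j + n + 1/2) ∧ j ≤ n + 1/2

lemma qnum_eq (q : ℝ) (hq0 : 0 < q) (hq1 : q < 1) (m : ℝ) :
    qnum q m = q ^ (1 - m) * (1 - q ^ (2 * m)) / (1 - q ^ (2:ℝ)) := by
  have hx : (0:ℝ) < q ^ m := Real.rpow_pos_of_pos hq0 m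
  have hq2 : q ^ (2:ℝ) = q * q := by
    rw [show (2:ℝ) = 1 + 1 by norm_num, Real.rpow_add hq0, Real.rpow_one]
  have h2m : q ^ (2*m) = q ^ m * q ^ m := by rw [two_mul, Real.rpow_add hq0]
  have hsub : q ^ (1 - m) = q / q ^ m := by rw [Real.rpow_sub hq0, Real.rpow_one]
  have hneg : q ^ (-m) = (q ^ m)⁻¹ := by rw [Real.rpow_neg hq0.le]
  have h1i : 1 < q⁻¹ := by rw [lt_inv_comm₀ one_pos hq0]; simpa using hq1
  have hd : q - q⁻¹ ≠ 0 := by linarith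
  have hc : 1 - q ^ (2:ℝ) ≠ 0 := by rw [hq2]; nlinarith
  unfold qnum
  rw [hneg, hsub, h2m, hq2]
  rw [div_eq_div_iff hd (by rw [hq2] at hc; exact hc)]
  field_simp
  ring

lemma sqrt_qnum (q : ℝ) (hq0 : 0 < q) (hq1 : q < 1) (m : ℝ) (hm : 0 ≤ m) :
    √(qnum q m) = q ^ ((1 - m)/2) * √(1 - q ^ (2*m)) / √(1 - q ^ (2:ℝ)) := by
  have h1 : (0:ℝ) ≤ q ^ (1-m) := (Real.rpow_pos_of_pos hq0 _).le
  have h2 : (0:ℝ) ≤ 1 - q ^ (2*m) := by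
    have := Real.rpow_le_one hq0.le hq1.le (by linarith : (0:ℝ) ≤ 2*m)
    linarith
  rw [qnum_eq q hq0 hq1, Real.sqrt_div (mul_nonneg h1 h2), Real.sqrt_mul h1,
    Real.sqrt_eq_rpow (q ^ (1-m)), ← Real.rpow_mul hq0.le]
  ring_nf

lemma G00 (q c A B W p1 p2 p3 p4 p5 : ℝ) (hq : 0 < q) (hc : 0 < c) (hW : W ≠ 0) :
    q^p1 * (q^p2 * √A / √c) * (q^p5 * (q^p3 * √B / √c) / (q^p4 * W / c))
      = q^(p1+p2+p5+p3-p4) * (√A * √B / W) := by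
  have hsc : √c ≠ 0 := by positivity
  rw [Real.rpow_sub hq, Real.rpow_add hq, Real.rpow_add hq, Real.rpow_add hq]
  have h4 : q ^ p4 ≠ 0 := by positivity
  field_simp
  linear_combination (-(√A*√B)) * Real.mul_self_sqrt hc.le

lemma G11 (q c A B W p1 p2 p3 p4 : ℝ) (hq : 0 < q) (hc : 0 < c) (hW : W ≠ 0) :
    q^p1 * (q^p2 * √A / √c) * ((q^p3 * √B / √c) / (q^p4 * W / c))
      = q^(p1+p2+p3-p4) * (√A * √B / W) := by
  have h := G00 q c A B W p1 p2 p3 p4 0 hq hc hW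
  rw [Real.rpow_zero, one_mul] at h
  rw [show p1+p2+p3-p4 = p1+p2+0+p3-p4 by ring]
  exact h

lemma G01 (q c A B W V p1 p2 p3 p4 p5 p6 : ℝ) (hq : 0 < q) (hc : 0 < c)
    (hW : W ≠ 0) (hV : V ≠ 0) :
    q^p1 * (q^p2 * √A / √c) * (q^p5 * (q^p3 * √B / √c) / ((q^p4 * W / c) * (q^p6 * V / c)))
      = q^(p1+p2+p5+p3-p4-p6) * c * (√A * √B / (W * V)) := by
  have hsc : √c ≠ 0 := by positivity
  rw [Real.rpow_sub hq, Real.rpow_sub hq, Real.rpow_add hq, Real.rpow_add hq, Real.rpow_add hq]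
  have h4 : q ^ p4 ≠ 0 := by positivity
  have h6 : q ^ p6 ≠ 0 := by positivity
  field_simp
  linear_combination (-(√A*√B)) * Real.mul_self_sqrt hc.le

lemma key (u w cc : ℝ) (hu0 : 0 ≤ u) (hu1 : u ≤ 1) (hw0 : 0 ≤ w) (hw : w ≤ 1 - cc)
    (hcc : 0 < cc) : |1 - √(1-u)/(1-w)| ≤ u + w/cc := by
  have hD : cc ≤ 1 - w := by linarith
  have hD0 : 0 < 1 - w := lt_of_lt_of_le hcc hD
  have hs1 : √(1-u) ≤ 1 := Real.sqrt_le_one.mpr (by linarith)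
  have hs2 : 1 - u ≤ √(1-u) := by
    nlinarith [Real.sq_sqrt (by linarith : (0:ℝ) ≤ 1-u), Real.sqrt_nonneg (1-u)]
  have hs0 : 0 ≤ √(1-u) := Real.sqrt_nonneg _
  have htcc : 0 ≤ w / cc := div_nonneg hw0 hcc.le
  rw [abs_le]
  constructor
  · have h1 : √(1-u)/(1-w) ≤ 1/(1-w) := by gcongr
    have h2 : 1/(1-w) ≤ 1 + w/cc := by
      rw [div_le_iff₀ hD0]
      have ht : w/cc*cc = w := div_mul_cancel₀ w hcc.ne'
      nlinarith [mul_nonneg htcc (by linarith : (0:ℝ) ≤ 1 - cc - w)]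
    linarith
  · have h3 : √(1-u) ≤ √(1-u)/(1-w) := by
      rw [le_div_iff₀ hD0]
      nlinarith [mul_nonneg hs0 hw0]
    linarith

set_option maxHeartbeats 1600000 in
/-- There is `C > 0` depending only on `q` such that for all `n ∈ ½ℤ₊` with
`n ≥ 1/2`, `i ∈ {-n,…,n}`, `j ∈ {-n+1/2,…,n-1/2}`, every entry of
`b⁻_{nij} + q^(n+i) diag((1-q^(2n+2j+1))^(1/2), (1-q^(2n+2j-1))^(1/2))`
has absolute value at most `C·q^(2n)`. -/
theorem bMinus_asymptotics' (q : ℝ) (hq0 : 0 < q) (hq1 : q < 1) :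
    ∃ C : ℝ, 0 < C ∧ ∀ n i j : ℝ, HalfNat n → 1/2 ≤ n → IdxRange n i → JRangeIn n j →
      ∀ r s : Fin 2,
        |(bM q n i j + (q ^ (n + i)) •
            !![Real.sqrt (1 - q ^ (2*n + 2*j + 1)), 0;
               0, Real.sqrt (1 - q ^ (2*n + 2*j - 1))]) r s|
          ≤ C * q ^ (2 * n) := by
  have hc : (0:ℝ) < 1 - q ^ (2:ℝ) := by
    have := Real.rpow_lt_one hq0.le hq1 two_pos
    linarith
  set c := 1 - q ^ (2:ℝ) with hcdef
  refine ⟨1 + 2/c, by positivity, ?_⟩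
  intro n i j _ hn hi hj r s
  obtain ⟨⟨k, hk⟩, hi2⟩ := hi
  obtain ⟨⟨k', hk'⟩, hj2⟩ := hj
  have hi1 : -n ≤ i := by
    have : (0:ℝ) ≤ i + n := hk ▸ k.cast_nonneg
    linarith
  have hj1 : -n + 1/2 ≤ j := by
    have : (0:ℝ) ≤ j + n - 1/2 := hk' ▸ k'.cast_nonneg
    linarith
  clear hk hk'
  -- basic positivity facts
  have h2n : qnum q (2*n) = q^(1-2*n) * (1 - q^(4*n)) / c := by
    rw [qnum_eq q hq0 hq1, show 2*(2*n) = 4*n by ring]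
  have h2n1 : qnum q (2*n+1) = q^(1-(2*n+1)) * (1 - q^(4*n+2)) / c := by
    rw [qnum_eq q hq0 hq1, show 2*(2*n+1) = 4*n+2 by ring]
  have hW : (1 - q^(4*n)) ≠ 0 := by
    have := Real.rpow_lt_one hq0.le hq1 (by linarith : (0:ℝ) < 4*n)
    linarith
  have hV : (1 - q^(4*n+2)) ≠ 0 := by
    have := Real.rpow_lt_one hq0.le hq1 (by linarith : (0:ℝ) < 4*n+2)
    linarith
  have hwle : q^(4*n) ≤ 1 - c := by
    have := Real.rpow_le_rpow_of_exponent_ge hq0 hq1.le (by linarith : (2:ℝ) ≤ 4*n)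
    simp only [hcdef]; linarith
  have hvle : q^(4*n+2) ≤ 1 - c := by
    have := Real.rpow_le_rpow_of_exponent_ge hq0 hq1.le (by linarith : (2:ℝ) ≤ 4*n+2)
    simp only [hcdef]; linarith
  have hu0 : (0:ℝ) ≤ q^(2*n-2*i) := (Real.rpow_pos_of_pos hq0 _).le
  have hu1 : q^(2*n-2*i) ≤ 1 := Real.rpow_le_one hq0.le hq1.le (by linarith)
  have hq2np : (0:ℝ) < q^(2*n) := Real.rpow_pos_of_pos hq0 _
  fin_cases r <;> fin_cases s <;> simp [bM, Matrix.add_apply]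
  -- entry (0,0)
  · have e1 : √(qnum q (n - i)) =
        q^((1-(n-i))/2) * √(1 - q^(2*n-2*i)) / √c := by
      rw [sqrt_qnum q hq0 hq1 _ (by linarith), show 2*(n-i) = 2*n-2*i by ring]
    have e2 : √(qnum q (n + j + 2⁻¹)) =
        q^((1-(n+j+2⁻¹))/2) * √(1 - q^(2*n+2*j+1)) / √c := by
      rw [sqrt_qnum q hq0 hq1 _ (by linarith), show 2*(n+j+2⁻¹) = 2*n+2*j+1 by ring]
    rw [e1, e2, h2n1,
      G00 q c (1 - q^(2*n-2*i)) (1 - q^(2*n+2*j+1)) (1 - q^(4*n+2))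
        ((i + j - 2⁻¹) / 2) ((1-(n-i))/2) ((1-(n+j+2⁻¹))/2) (1-(2*n+1)) (-1/2) hq0 hc hV,
      show (i + j - 2⁻¹) / 2 + (1-(n-i))/2 + (-1/2) + (1-(n+j+2⁻¹))/2 - (1-(2*n+1)) = n + i
        by ring]
    rw [show -(q^(n+i) * (√(1 - q^(2*n-2*i)) * √(1 - q^(2*n+2*j+1)) / (1 - q^(4*n+2)))) +
          q^(n+i) * √(1 - q^(2*n+2*j+1))
        = q^(n+i) * (√(1 - q^(2*n+2*j+1)) * (1 - √(1 - q^(2*n-2*i))/(1 - q^(4*n+2)))) by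
      ring]
    have hB1 : √(1 - q^(2*n+2*j+1)) ≤ 1 :=
      Real.sqrt_le_one.mpr (by nlinarith [(Real.rpow_pos_of_pos hq0 (2*n+2*j+1)).le])
    have hkey := key (q^(2*n-2*i)) (q^(4*n+2)) c hu0 hu1
      (Real.rpow_pos_of_pos hq0 _).le hvle hc
    calc |q^(n+i) * (√(1 - q^(2*n+2*j+1)) * (1 - √(1 - q^(2*n-2*i))/(1 - q^(4*n+2))))|
        = q^(n+i) * (√(1 - q^(2*n+2*j+1)) * |1 - √(1 - q^(2*n-2*i))/(1 - q^(4*n+2))|) := by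
          rw [abs_mul, abs_mul, abs_of_nonneg (Real.rpow_pos_of_pos hq0 _).le,
            abs_of_nonneg (Real.sqrt_nonneg _)]
      _ ≤ q^(n+i) * (1 * (q^(2*n-2*i) + q^(4*n+2)/c)) := by
          apply mul_le_mul_of_nonneg_left _ (Real.rpow_pos_of_pos hq0 _).le
          exact mul_le_mul hB1 hkey (abs_nonneg _) one_pos.le
      _ = q^(n+i) * q^(2*n-2*i) + q^(n+i) * q^(4*n+2) / c := by ring
      _ = q^((n+i)+(2*n-2*i)) + q^((n+i)+(4*n+2)) / c := by
          rw [← Real.rpow_add hq0, ← Real.rpow_add hq0]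
      _ ≤ q^(2*n) + q^(2*n)/c := by
          have a1 := Real.rpow_le_rpow_of_exponent_ge hq0 hq1.le
            (by linarith : 2*n ≤ (n+i)+(2*n-2*i))
          have a2 := Real.rpow_le_rpow_of_exponent_ge hq0 hq1.le
            (by linarith : 2*n ≤ (n+i)+(4*n+2))
          have b2 : q^((n+i)+(4*n+2))/c ≤ q^(2*n)/c := by gcongr
          linarith
      _ ≤ (1 + 2/c) * q^(2*n) := by
          have h := div_nonneg hq2np.le hc.le
          have h2 : (1 + 2/c) * q^(2*n) = q^(2*n) + 2*(q^(2*n)/c) := by ring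
          rw [h2]; linarith
  -- entry (0,1)
  · have e1 : √(qnum q (n - i)) =
        q^((1-(n-i))/2) * √(1 - q^(2*n-2*i)) / √c := by
      rw [sqrt_qnum q hq0 hq1 _ (by linarith), show 2*(n-i) = 2*n-2*i by ring]
    have e2 : √(qnum q (n - j + 2⁻¹)) =
        q^((1-(n-j+2⁻¹))/2) * √(1 - q^(2*n-2*j+1)) / √c := by
      rw [sqrt_qnum q hq0 hq1 _ (by linarith), show 2*(n-j+2⁻¹) = 2*n-2*j+1 by ring]
    rw [← abs_mul, ← abs_mul, e1, e2, h2n, h2n1,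
      G01 q c (1 - q^(2*n-2*i)) (1 - q^(2*n-2*j+1)) (1 - q^(4*n)) (1 - q^(4*n+2))
        ((i + j - 2⁻¹) / 2) ((1-(n-i))/2) ((1-(n-j+2⁻¹))/2) (1-2*n) n (1-(2*n+1)) hq0 hc hW hV,
      show (i + j - 2⁻¹) / 2 + (1-(n-i))/2 + n + (1-(n-j+2⁻¹))/2 - (1-2*n) - (1-(2*n+1))
          = 4*n+i+j-2⁻¹ by ring]
    have hW0 : (0:ℝ) < 1 - q^(4*n) := by
      have := Real.rpow_lt_one hq0.le hq1 (by linarith : (0:ℝ) < 4*n); linarith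
    have hV0 : (0:ℝ) < 1 - q^(4*n+2) := by
      have := Real.rpow_lt_one hq0.le hq1 (by linarith : (0:ℝ) < 4*n+2); linarith
    have hsA : √(1 - q^(2*n-2*i)) ≤ 1 := Real.sqrt_le_one.mpr (by linarith)
    have hsB : √(1 - q^(2*n-2*j+1)) ≤ 1 :=
      Real.sqrt_le_one.mpr (by nlinarith [(Real.rpow_pos_of_pos hq0 (2*n-2*j+1)).le])
    have hE : q^(4*n+i+j-2⁻¹) ≤ q^(2*n) :=
      Real.rpow_le_rpow_of_exponent_ge hq0 hq1.le (by linarith)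
    have hEp : (0:ℝ) < q^(4*n+i+j-2⁻¹) := Real.rpow_pos_of_pos hq0 _
    have hfrac : √(1 - q^(2*n-2*i)) * √(1 - q^(2*n-2*j+1)) / ((1 - q^(4*n)) * (1 - q^(4*n+2)))
        ≤ 1 / (c * c) := by
      apply div_le_div₀ zero_le_one
        (mul_le_one₀ hsA (Real.sqrt_nonneg _) hsB) (by positivity)
      have w1 : c ≤ 1 - q^(4*n) := by linarith
      have w2 : c ≤ 1 - q^(4*n+2) := by linarith
      exact mul_le_mul w1 w2 hc.le hW0.le
    rw [abs_of_nonneg (by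
      apply mul_nonneg (mul_nonneg hEp.le hc.le)
      apply div_nonneg (mul_nonneg (Real.sqrt_nonneg _) (Real.sqrt_nonneg _))
      exact (mul_pos hW0 hV0).le)]
    calc q^(4*n+i+j-2⁻¹) * c *
          (√(1 - q^(2*n-2*i)) * √(1 - q^(2*n-2*j+1)) / ((1 - q^(4*n)) * (1 - q^(4*n+2))))
        ≤ q^(2*n) * c * (1 / (c * c)) := by
          apply mul_le_mul _ hfrac _ (by positivity)
          · exact mul_le_mul_of_nonneg_right hE hc.le
          · apply div_nonneg (mul_nonneg (Real.sqrt_nonneg _) (Real.sqrt_nonneg _))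
            exact (mul_pos hW0 hV0).le
      _ = q^(2*n) / c := by field_simp
      _ ≤ (1 + 2/c) * q^(2*n) := by
          have h := div_nonneg hq2np.le hc.le
          have h2 : (1 + 2/c) * q^(2*n) = q^(2*n) + 2*(q^(2*n)/c) := by ring
          rw [h2]; linarith
  -- entry (1,0)
  · have h1 : (0:ℝ) < 2/c := div_pos two_pos hc
    nlinarith [hq2np]
  -- entry (1,1)
  · have e1 : √(qnum q (n - i)) =
        q^((1-(n-i))/2) * √(1 - q^(2*n-2*i)) / √c := by
      rw [sqrt_qnum q hq0 hq1 _ (by linarith), show 2*(n-i) = 2*n-2*i by ring]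
    have e2 : √(qnum q (n + j - 2⁻¹)) =
        q^((1-(n+j-2⁻¹))/2) * √(1 - q^(2*n+2*j-1)) / √c := by
      rw [sqrt_qnum q hq0 hq1 _ (by linarith), show 2*(n+j-2⁻¹) = 2*n+2*j-1 by ring]
    rw [e1, e2, h2n,
      G11 q c (1 - q^(2*n-2*i)) (1 - q^(2*n+2*j-1)) (1 - q^(4*n))
        ((i + j - 2⁻¹) / 2) ((1-(n-i))/2) ((1-(n+j-2⁻¹))/2) (1-2*n) hq0 hc hW,
      show (i + j - 2⁻¹) / 2 + (1-(n-i))/2 + (1-(n+j-2⁻¹))/2 - (1-2*n) = n + i by ring]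
    rw [show -(q^(n+i) * (√(1 - q^(2*n-2*i)) * √(1 - q^(2*n+2*j-1)) / (1 - q^(4*n)))) +
          q^(n+i) * √(1 - q^(2*n+2*j-1))
        = q^(n+i) * (√(1 - q^(2*n+2*j-1)) * (1 - √(1 - q^(2*n-2*i))/(1 - q^(4*n)))) by
      ring]
    have hB1 : √(1 - q^(2*n+2*j-1)) ≤ 1 :=
      Real.sqrt_le_one.mpr (by nlinarith [(Real.rpow_pos_of_pos hq0 (2*n+2*j-1)).le])
    have hkey := key (q^(2*n-2*i)) (q^(4*n)) c hu0 hu1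
      (Real.rpow_pos_of_pos hq0 _).le hwle hc
    calc |q^(n+i) * (√(1 - q^(2*n+2*j-1)) * (1 - √(1 - q^(2*n-2*i))/(1 - q^(4*n))))|
        = q^(n+i) * (√(1 - q^(2*n+2*j-1)) * |1 - √(1 - q^(2*n-2*i))/(1 - q^(4*n))|) := by
          rw [abs_mul, abs_mul, abs_of_nonneg (Real.rpow_pos_of_pos hq0 _).le,
            abs_of_nonneg (Real.sqrt_nonneg _)]
      _ ≤ q^(n+i) * (1 * (q^(2*n-2*i) + q^(4*n)/c)) := by
          apply mul_le_mul_of_nonneg_left _ (Real.rpow_pos_of_pos hq0 _).le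
          exact mul_le_mul hB1 hkey (abs_nonneg _) one_pos.le
      _ = q^(n+i) * q^(2*n-2*i) + q^(n+i) * q^(4*n) / c := by ring
      _ = q^((n+i)+(2*n-2*i)) + q^((n+i)+(4*n)) / c := by
          rw [← Real.rpow_add hq0, ← Real.rpow_add hq0]
      _ ≤ q^(2*n) + q^(2*n)/c := by
          have a1 := Real.rpow_le_rpow_of_exponent_ge hq0 hq1.le
            (by linarith : 2*n ≤ (n+i)+(2*n-2*i))
          have a2 := Real.rpow_le_rpow_of_exponent_ge hq0 hq1.le
            (by linarith : 2*n ≤ (n+i)+(4*n))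
          have b2 : q^((n+i)+(4*n))/c ≤ q^(2*n)/c := by gcongr
          linarith
      _ ≤ (1 + 2/c) * q^(2*n) := by
          have h := div_nonneg hq2np.le hc.le
          have h2 : (1 + 2/c) * q^(2*n) = q^(2*n) + 2*(q^(2*n)/c) := by ring
          rw [h2]; linarith
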